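/- For every integer k ≥ 3, the quantity ω_k(0) := ψ(k/2) - ψ(1) - log k is nondecreasing along k ↦ k+2, i.e., ω_{k+2}(0) - ω_k(0) = 2/k - log(1 + 2/k) ≥ 0, and lim_{k→∞} ω_k(0) = γ - log 2 < 0, where γ is the Euler–Mascheroni constant. Consequently ω_k(0) < 0 for all integers k ≥ 1. -/

import Mathlib

open Real Filter Set

/-- The digamma function `ψ = (log ∘ Γ)'`. -/
noncomputable def digamma (x : ℝ) : ℝ := deriv (fun y => Real.log (Real.Gamma y)) x

private lemma gamma_diff {x : ℝ} (hx : 0 < x) : DifferentiableAt ℝ Real.Gamma x :=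
  Real.differentiableAt_Gamma fun m =>
    ((neg_nonpos.mpr (Nat.cast_nonneg m)).trans_lt hx).ne'

private lemma diffAux {x : ℝ} (hx : 0 < x) :
    DifferentiableAt ℝ (fun y => Real.log (Real.Gamma y)) x :=
  (gamma_diff hx).log (Real.Gamma_pos_of_pos hx).ne'

private lemma digamma_eq {x : ℝ} (hx : 0 < x) :
    digamma x = deriv Real.Gamma x / Real.Gamma x :=
  deriv.log (gamma_diff hx) (Real.Gamma_pos_of_pos hx).ne'

private lemma digamma_one : digamma 1 = -Real.eulerMascheroniConstant := by
  rw [digamma_eq one_pos, Real.hasDerivAt_Gamma_one.deriv, Real.Gamma_one, div_one]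

private lemma digamma_half : digamma (1 / 2) = -(Real.eulerMascheroniConstant + 2 * Real.log 2) := by
  have hpi : Real.sqrt Real.pi ≠ 0 := (Real.sqrt_pos.mpr Real.pi_pos).ne'
  rw [digamma_eq one_half_pos, Real.hasDerivAt_Gamma_one_half.deriv, Real.Gamma_one_half_eq]
  field_simp

private lemma digamma_rec {x : ℝ} (hx : 0 < x) : digamma (x + 1) = digamma x + 1 / x := by
  unfold digamma
  rw [← deriv_comp_add_const, one_div, ← Real.deriv_log,
    ← deriv_add (diffAux hx) (Real.differentiableAt_log hx.ne')]
  apply Filter.EventuallyEq.deriv_eq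
  filter_upwards [eventually_gt_nhds hx] with y hy
  rw [Real.Gamma_add_one hy.ne', Real.log_mul hy.ne' (Real.Gamma_pos_of_pos hy).ne', add_comm]
  rfl

private lemma logGamma_add_one {y : ℝ} (hy : 0 < y) :
    (Real.log ∘ Real.Gamma) (y + 1) = Real.log y + (Real.log ∘ Real.Gamma) y := by
  simp only [Function.comp_apply]
  rw [Real.Gamma_add_one hy.ne', Real.log_mul hy.ne' (Real.Gamma_pos_of_pos hy).ne']

private lemma digamma_le {x : ℝ} (hx : 0 < x) : digamma x ≤ Real.log x := by
  have hc := Real.convexOn_log_Gamma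
  have h := hc.deriv_le_slope (mem_Ioi.mpr hx) (mem_Ioi.mpr (by linarith : (0:ℝ) < x + 1))
    (by linarith) (diffAux hx)
  rw [slope_def_field, add_sub_cancel_left, div_one, logGamma_add_one hx,
    add_sub_cancel_right] at h
  exact h

private lemma le_digamma {x : ℝ} (hx : 1 < x) : Real.log (x - 1) ≤ digamma x := by
  have hx1 : (0:ℝ) < x - 1 := by linarith
  have hc := Real.convexOn_log_Gamma
  have h := hc.slope_le_deriv (mem_Ioi.mpr hx1) (mem_Ioi.mpr (by linarith : (0:ℝ) < x))
    (by linarith) (diffAux (by linarith))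
  rw [slope_def_field, sub_sub_cancel, div_one] at h
  have e : (Real.log ∘ Real.Gamma) x = Real.log (x - 1) + (Real.log ∘ Real.Gamma) (x - 1) := by
    have := logGamma_add_one hx1
    rwa [sub_add_cancel] at this
  rw [e, add_sub_cancel_right] at h
  exact h

theorem omega_k_zero_neg :
    (∀ k : ℕ, 3 ≤ k →
      (digamma ((k + 2 : ℝ) / 2) - digamma 1 - Real.log (k + 2))
          - (digamma ((k : ℝ) / 2) - digamma 1 - Real.log k)
        = 2 / k - Real.log (1 + 2 / k) ∧
      0 ≤ 2 / (k : ℝ) - Real.log (1 + 2 / k)) ∧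
    Tendsto (fun k : ℕ => digamma ((k : ℝ) / 2) - digamma 1 - Real.log k) atTop
      (nhds (Real.eulerMascheroniConstant - Real.log 2)) ∧
    Real.eulerMascheroniConstant - Real.log 2 < 0 ∧
    (∀ k : ℕ, 1 ≤ k → digamma ((k : ℝ) / 2) - digamma 1 - Real.log k < 0) := by
  have h1 : ∀ k : ℕ, 3 ≤ k →
      (digamma ((k + 2 : ℝ) / 2) - digamma 1 - Real.log (k + 2))
          - (digamma ((k : ℝ) / 2) - digamma 1 - Real.log k)
        = 2 / k - Real.log (1 + 2 / k) ∧
      0 ≤ 2 / (k : ℝ) - Real.log (1 + 2 / k) := by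
    intro k hk
    have hk0 : (0:ℝ) < k := by exact_mod_cast Nat.lt_of_lt_of_le (by norm_num) hk
    constructor
    · have e1 : ((k : ℝ) + 2) / 2 = (k : ℝ) / 2 + 1 := by ring
      have e2 : Real.log ((k : ℝ) + 2) = Real.log k + Real.log (1 + 2 / k) := by
        rw [← Real.log_mul hk0.ne' (by positivity)]
        congr 1
        field_simp
      rw [e1, digamma_rec (by positivity), e2]
      field_simp
      ring
    · have h := Real.log_le_sub_one_of_pos (show (0:ℝ) < 1 + 2 / k by positivity)
      have : (1 : ℝ) + 2 / k - 1 = 2 / k := by ring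
      linarith [this ▸ h]
  have hγ : Real.eulerMascheroniConstant - Real.log 2 < 0 := by
    have h1 := Real.eulerMascheroniConstant_lt_two_thirds
    have h2 := Real.log_two_gt_d9
    linarith
  have key : Tendsto (fun k : ℕ => digamma ((k : ℝ) / 2) - Real.log k) atTop
      (nhds (-Real.log 2)) := by
    have hlow : Tendsto (fun k : ℕ => Real.log (1 / 2 - 1 / k)) atTop
        (nhds (-Real.log 2)) := by
      have h0 : Tendsto (fun k : ℕ => (1:ℝ) / 2 - 1 / k) atTop (nhds (1 / 2)) := by
        simpa using (tendsto_one_div_atTop_nhds_zero_nat).const_sub (1/2 : ℝ)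
      have hc : ContinuousAt Real.log (1/2) := Real.continuousAt_log (by norm_num)
      have := hc.tendsto.comp h0
      simpa [Real.log_div one_ne_zero two_ne_zero, Function.comp_def] using this
    apply tendsto_of_tendsto_of_tendsto_of_le_of_le' hlow tendsto_const_nhds
    · filter_upwards [eventually_ge_atTop 3] with k hk
      have hk0 : (0:ℝ) < k := by exact_mod_cast Nat.lt_of_lt_of_le (by norm_num) hk
      have hk3 : (3:ℝ) ≤ k := by exact_mod_cast hk
      have hlb := le_digamma (x := (k:ℝ)/2) (by linarith)
      have e : Real.log (1 / 2 - 1 / (k:ℝ)) = Real.log ((k:ℝ)/2 - 1) - Real.log k := by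
        rw [← Real.log_div (by intro hc0; nlinarith) hk0.ne']
        congr 1
        field_simp
        try ring
      linarith
    · filter_upwards [eventually_ge_atTop 1] with k hk
      have hk0 : (0:ℝ) < k := by exact_mod_cast Nat.lt_of_lt_of_le (by norm_num) hk
      have hub := digamma_le (x := (k:ℝ)/2) (by positivity)
      have e : Real.log ((k:ℝ)/2) = Real.log k - Real.log 2 :=
        Real.log_div hk0.ne' two_ne_zero
      linarith
  have h2 : Tendsto (fun k : ℕ => digamma ((k : ℝ) / 2) - digamma 1 - Real.log k) atTop
      (nhds (Real.eulerMascheroniConstant - Real.log 2)) := by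
    rw [show Real.eulerMascheroniConstant - Real.log 2
        = -Real.log 2 + Real.eulerMascheroniConstant by ring]
    refine Tendsto.congr (fun k => ?_) (key.add_const Real.eulerMascheroniConstant)
    rw [digamma_one]; ring
  refine ⟨h1, h2, hγ, ?_⟩
  intro k hk
  have hlog2 : (0:ℝ) < Real.log 2 := Real.log_pos (by norm_num)
  rcases eq_or_lt_of_le hk with h | h
  · -- k = 1
    rw [← h]
    push_cast
    rw [digamma_half, digamma_one, Real.log_one]
    linarith
  rcases eq_or_lt_of_le (show 2 ≤ k by omega) with h' | h'
  · -- k = 2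
    rw [← h']
    push_cast
    rw [show (2:ℝ)/2 = 1 by norm_num]
    simpa using hlog2
  · -- k ≥ 3
    have hk3 : 3 ≤ k := by omega
    set a : ℕ → ℝ := fun k => digamma ((k : ℝ) / 2) - digamma 1 - Real.log k with ha
    have step : ∀ m : ℕ, 3 ≤ m → a m ≤ a (m + 2) := by
      intro m hm
      obtain ⟨he, hge⟩ := h1 m hm
      have : a (m + 2) = digamma (((m:ℝ) + 2) / 2) - digamma 1 - Real.log ((m:ℝ) + 2) := by
        simp only [ha]
        push_cast
        ring_nf
      rw [this]
      linarith
    have mono : ∀ n : ℕ, a k ≤ a (k + 2 * n) := by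
      intro n
      induction n with
      | zero => simp
      | succ n ih =>
        have := step (k + 2 * n) (by omega)
        calc a k ≤ a (k + 2 * n) := ih
          _ ≤ a (k + 2 * n + 2) := this
          _ = a (k + 2 * (n + 1)) := by ring_nf
    have hcomp : Tendsto (fun n : ℕ => a (k + 2 * n)) atTop
        (nhds (Real.eulerMascheroniConstant - Real.log 2)) := by
      apply h2.comp
      exact tendsto_atTop_mono (fun n => by simp only [id_eq]; omega) tendsto_id
    have := ge_of_tendsto' hcomp mono
    exact lt_of_le_of_lt this hγ
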